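/- For every natural number n ≥ 1 and every real x, U_n(x) + Σ_{k=1}^{n} ((−1)^k / k!) · Σ_{i=0}^{⌊(n−k)/2⌋} (n−k−2i+1) · (n−i)^{\underline{k−1}} · C(k+i−1, k−1) · U_{n−k−2i}(x) · (2x)^k = cos(πn/2). -/

import Mathlib

open Polynomial Polynomial.Chebyshev Finset

/-- The falling factorial a(a-1)⋯(a-m+1). -/
noncomputable def fallFac (a : ℝ) (m : ℕ) : ℝ := ∏ j ∈ Finset.range m, (a - j)

lemma fallFac_zero (a : ℝ) : fallFac a 0 = 1 := by simp [fallFac]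

lemma fallFac_succ (a : ℝ) (m : ℕ) : fallFac a (m + 1) = fallFac a m * (a - m) := by
  simp [fallFac, Finset.prod_range_succ]

lemma fallFac_succ' (a : ℝ) (m : ℕ) : fallFac a (m + 1) = a * fallFac (a - 1) m := by
  rw [fallFac, Finset.prod_range_succ']
  simp only [Nat.cast_zero, sub_zero]
  rw [mul_comm]
  congr 1
  refine Finset.prod_congr rfl (fun j _ => ?_)
  push_cast
  ring

lemma sum_fall (a : ℝ) (k m : ℕ) :
    ∑ i ∈ Finset.range (m + 1),
      (a - (k + 1) - 2 * i + 1) * fallFac (a - i) k * ((k + i).choose k : ℝ)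
    = fallFac (a - m) (k + 1) * ((k + 1 + m).choose (k + 1) : ℝ) := by
  induction m with
  | zero =>
      simp [fallFac_succ]
      ring
  | succ m ih =>
      rw [Finset.sum_range_succ, ih]
      have h1 : fallFac (a - (m + 1 : ℕ)) (k + 1) = fallFac (a - ((m : ℝ) + 1)) k * (a - ((m : ℝ) + 1) - k) := by
        push_cast
        rw [fallFac_succ]
      have h2 : fallFac (a - m) (k + 1) = (a - m) * fallFac (a - ((m : ℝ) + 1)) k := by
        rw [fallFac_succ']
        congr 2
        ring
      have h3 : ((k + 1 + (m + 1)).choose (k + 1) : ℝ)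
          = ((k + m + 1).choose (k + 1) : ℝ) + ((k + m + 1).choose k : ℝ) := by
        have he : k + 1 + (m + 1) = (k + m + 1) + 1 := by omega
        rw [he, Nat.choose_succ_succ' (k + m + 1) k]
        push_cast
        ring
      have h4 : ((k + m + 1).choose (k + 1) : ℝ) * (k + 1) = ((k + m + 1).choose k : ℝ) * (m + 1) := by
        have := Nat.choose_succ_right_eq (k + m + 1) k
        have h5 : k + m + 1 - k = m + 1 := by omega
        rw [h5] at this
        exact_mod_cast congrArg (Nat.cast : ℕ → ℝ) this
      have h6 : (k + 1 + m) = (k + m + 1) := by omega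
      have h7 : (k + (m + 1)) = (k + m + 1) := by omega
      rw [h6, h7, h1, h2, h3]
      push_cast
      linear_combination (fallFac (a - ((m : ℝ) + 1)) k) * h4

noncomputable def V (n : ℕ) : ℝ[X] :=
  ∑ i ∈ Finset.range ((n + 1) / 2), C ((n : ℝ) - 2 * i) * U ℝ ((n : ℤ) - 1 - 2 * i)

lemma two_X_mul_U (j : ℤ) : (2 * X : ℝ[X]) * U ℝ j = U ℝ (j + 1) + U ℝ (j - 1) := by
  have h := U_add_two ℝ (j - 1)
  rw [show j - 1 + 2 = j + 1 by ring, show j - 1 + 1 = j by ring] at h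
  linear_combination -h

lemma Vrec (n : ℕ) : V (n + 2) = C ((n : ℝ) + 2) * U ℝ ((n : ℤ) + 1) + V n := by
  unfold V
  rw [show (n + 2 + 1) / 2 = (n + 1) / 2 + 1 by omega, Finset.sum_range_succ', add_comm]
  congr 1
  · push_cast; ring_nf
  · refine Finset.sum_congr rfl (fun i _ => ?_)
    push_cast; ring_nf

lemma WW (n : ℕ) : (2 * X : ℝ[X]) * V (n + 1) = C ((n : ℝ) + 1) * U ℝ ((n : ℤ) + 1) + 2 * V n := by
  induction n using Nat.twoStepInduction with
  | zero =>
      have hV1 : V 1 = 1 := by simp [V, U_zero]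
      have hV0 : V 0 = 0 := by simp [V]
      rw [hV1, hV0, show (((0:ℕ)):ℤ)+1 = 1 by norm_num, U_one]
      simp only [map_add, map_one, map_zero, Nat.cast_zero]
      ring
  | one =>
      have hV2 : V 2 = C 2 * U ℝ 1 := by
        unfold V
        norm_num
      have hV1 : V 1 = 1 := by simp [V, U_zero]
      rw [hV2, hV1]
      have h := two_X_mul_U 1
      rw [show ((1:ℤ)+1) = 2 by ring, show ((1:ℤ)-1) = 0 by ring, U_zero] at h
      simp only [map_add, map_ofNat, map_one, map_natCast, Nat.cast_one] at *
      rw [show ((1:ℤ)+1 : ℤ) = 2 by norm_num]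
      linear_combination (2 : ℝ[X]) * h
  | more n ih _ =>
      have vr1 : V (n + 1 + 2) = C ((n : ℝ) + 3) * U ℝ ((n : ℤ) + 2) + V (n + 1) := by
        have := Vrec (n + 1)
        push_cast at this
        ring_nf at this ⊢
        exact this
      have vr0 := Vrec n
      have tx : (2 * X : ℝ[X]) * U ℝ ((n : ℤ) + 2) = U ℝ ((n : ℤ) + 3) + U ℝ ((n : ℤ) + 1) := by
        have := two_X_mul_U ((n : ℤ) + 2)
        ring_nf at this ⊢
        exact this
      show (2 * X : ℝ[X]) * V (n + 2 + 1) = C ((n + 2 : ℕ) + 1 : ℝ) * U ℝ ((n + 2 : ℕ) + 1 : ℤ) + 2 * V (n + 2)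
      push_cast
      rw [show n + 2 + 1 = n + 1 + 2 by omega]
      rw [vr1, vr0]
      simp only [map_add, map_ofNat, map_one, map_natCast] at *
      ring_nf at *
      linear_combination ((n : ℝ[X]) + 3) * tx + ih

lemma derivU (n : ℕ) : derivative (U ℝ n) = 2 * V n := by
  induction n using Nat.twoStepInduction with
  | zero =>
      rw [show (((0:ℕ)):ℤ) = 0 by norm_num, U_zero]
      simp [V]
  | one =>
      rw [show (((1:ℕ)):ℤ) = 1 by norm_num, U_one]
      have hV1 : V 1 = 1 := by simp [V, U_zero]
      rw [hV1]
      simp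
  | more n ih ih1 =>
      have hU : U ℝ (((n+2:ℕ)):ℤ) = 2 * X * U ℝ ((n:ℤ)+1) - U ℝ (n:ℤ) := by
        have := U_add_two ℝ (n : ℤ)
        push_cast
        ring_nf
        ring_nf at this
        exact this
      rw [hU, derivative_sub, derivative_mul, derivative_mul]
      have ih1' : derivative (U ℝ ((n:ℤ)+1)) = 2 * V (n+1) := by
        have := ih1
        push_cast at this
        exact this
      rw [ih1', ih]
      have vr := Vrec n
      have ww := WW n
      have : V (n + 2) = V ((n+2 : ℕ)) := by norm_num
      rw [← this] at *
      rw [vr]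
      simp only [derivative_X, derivative_ofNat, map_add, map_ofNat, map_one, map_natCast] at *
      ring_nf at *
      linear_combination 2 * ww

noncomputable def S (n k : ℕ) : ℝ[X] :=
  ∑ i ∈ Finset.range ((n - (k+1))/2 + 1),
    C (((n:ℝ) - (k+1) - 2*i + 1) * fallFac ((n:ℝ) - i) k * ((k+i).choose k : ℝ))
      * U ℝ ((n:ℤ) - (k+1) - 2*i)

lemma key (n k : ℕ) (h : k + 2 ≤ n) :
    ∑ i ∈ range ((n - (k+1))/2 + 1),
      C (((n:ℝ) - (k+1) - 2*i + 1) * fallFac ((n:ℝ) - i) k * ((k+i).choose k : ℝ))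
        * V (n - (k+1) - 2*i)
    = ∑ m ∈ range ((n - (k+2))/2 + 1),
      C (((n:ℝ) - (k+2) - 2*m + 1) * fallFac ((n:ℝ) - m) (k+1) * ((k+1+m).choose (k+1) : ℝ))
        * U ℝ ((n:ℤ) - (k+2) - 2*m) := by
  have lhs_eq : ∑ i ∈ range ((n - (k+1))/2 + 1),
      C (((n:ℝ) - (k+1) - 2*i + 1) * fallFac ((n:ℝ) - i) k * ((k+i).choose k : ℝ))
        * V (n - (k+1) - 2*i)
      = ∑ i ∈ range ((n - (k+1))/2 + 1), ∑ j ∈ range ((n - (k+1) - 2*i + 1)/2),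
          C (((n:ℝ) - (k+1) - 2*i + 1) * fallFac ((n:ℝ) - i) k * ((k+i).choose k : ℝ))
            * (C ((n:ℝ) - (k+1) - 2*i - 2*j) * U ℝ ((n:ℤ) - (k+2) - 2*i - 2*j)) := by
    refine Finset.sum_congr rfl (fun i hi => ?_)
    have hi' : 2 * i ≤ n - (k+1) := by
      have := Finset.mem_range.mp hi; omega
    unfold V
    rw [Finset.mul_sum]
    refine Finset.sum_congr rfl (fun j hj => ?_)
    have hc1 : ((n - (k+1) - 2*i : ℕ) : ℝ) = (n:ℝ) - (k+1) - 2*i := by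
      have e : (n - (k+1) - 2*i : ℕ) = n - (k+1+2*i) := by omega
      rw [e, Nat.cast_sub (by omega)]
      push_cast; ring
    have hc2 : ((n - (k+1) - 2*i : ℕ) : ℤ) - 1 - 2*(j:ℤ) = (n:ℤ) - (k+2) - 2*i - 2*j := by
      have e : (n - (k+1) - 2*i : ℕ) = n - (k+1+2*i) := by omega
      rw [e, Nat.cast_sub (by omega)]
      push_cast; ring
    rw [hc1, hc2]
  rw [lhs_eq]
  have rhs_eq : ∀ m ∈ range ((n - (k+2))/2 + 1),
      C (((n:ℝ) - (k+2) - 2*m + 1) * fallFac ((n:ℝ) - m) (k+1) * ((k+1+m).choose (k+1) : ℝ))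
        * U ℝ ((n:ℤ) - (k+2) - 2*m)
      = ∑ i ∈ range (m + 1),
          C (((n:ℝ) - (k+1) - 2*i + 1) * fallFac ((n:ℝ) - i) k * ((k+i).choose k : ℝ))
            * (C ((n:ℝ) - (k+1) - 2*m) * U ℝ ((n:ℤ) - (k+2) - 2*m)) := by
    intro m _
    rw [← Finset.sum_mul, ← map_sum, sum_fall, ← mul_assoc, ← Polynomial.C_mul]
    congr 2
    ring
  rw [Finset.sum_congr rfl rhs_eq]
  rw [Finset.sum_sigma', Finset.sum_sigma']
  refine Finset.sum_nbij' (fun p => ⟨p.1 + p.2, p.1⟩) (fun p => ⟨p.2, p.1 - p.2⟩) ?_ ?_ ?_ ?_ ?_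
  · rintro ⟨i, j⟩ hp
    simp only [Finset.mem_sigma, Finset.mem_range] at hp ⊢
    omega
  · rintro ⟨m, i⟩ hp
    simp only [Finset.mem_sigma, Finset.mem_range] at hp ⊢
    omega
  · rintro ⟨i, j⟩ hp
    simp only [Finset.mem_sigma, Finset.mem_range] at hp
    simp only [Sigma.mk.inj_iff, heq_eq_eq, true_and, and_true]
    omega
  · rintro ⟨m, i⟩ hp
    simp only [Finset.mem_sigma, Finset.mem_range] at hp
    simp only [Sigma.mk.inj_iff, heq_eq_eq, true_and, and_true]
    omega
  · rintro ⟨i, j⟩ hp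
    simp only [Finset.mem_sigma, Finset.mem_range] at hp
    push_cast
    ring_nf

lemma derivK : ∀ k n : ℕ, k + 1 ≤ n →
    derivative^[k+1] (U ℝ n) = ((2:ℝ)^(k+1)) • S n k := by
  intro k
  induction k with
  | zero =>
      intro n hn
      rw [Function.iterate_one, derivU]
      rw [pow_one, Polynomial.smul_eq_C_mul, map_ofNat]
      congr 1
      unfold V _root_.S
      rw [show (n - (0+1))/2 + 1 = (n+1)/2 by omega]
      refine Finset.sum_congr rfl (fun i hi => ?_)
      simp only [fallFac, Finset.prod_range_zero, Nat.choose_zero_right, Nat.cast_one,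
        Nat.cast_zero, Nat.cast_ofNat, mul_one, zero_add]
      push_cast
      ring_nf
  | succ k ih =>
      intro n hn
      rw [Function.iterate_succ_apply', ih n (by omega)]
      rw [derivative_smul]
      have hds : derivative (S n k) = 2 * ∑ i ∈ Finset.range ((n - (k+1))/2 + 1),
          C (((n:ℝ) - (k+1) - 2*i + 1) * fallFac ((n:ℝ) - i) k * ((k+i).choose k : ℝ))
            * V (n - (k+1) - 2*i) := by
        unfold _root_.S
        rw [derivative_sum, Finset.mul_sum]
        refine Finset.sum_congr rfl (fun i hi => ?_)
        have hi' : 2 * i ≤ n - (k+1) := by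
          have := Finset.mem_range.mp hi; omega
        rw [derivative_mul, derivative_C, zero_mul, zero_add]
        have hidx : ((n:ℤ) - (k+1) - 2*i) = ((n - (k+1) - 2*i : ℕ) : ℤ) := by
          have e : (n - (k+1) - 2*i : ℕ) = n - (k+1+2*i) := by omega
          rw [e, Nat.cast_sub (by omega)]
          push_cast; ring
        rw [hidx, derivU]
        ring
      rw [hds, key n k hn]
      unfold _root_.S
      rw [show (2:ℝ[X]) = Polynomial.C 2 from (map_ofNat Polynomial.C 2).symm, ← Polynomial.smul_eq_C_mul,
        smul_smul, ← pow_succ]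
      congr 1
      refine Finset.sum_congr (by rw [show k+1+1 = k+2 from by omega]) (fun i hi => ?_)
      push_cast
      ring_nf

lemma natDegree_U_le (n : ℕ) : (U ℝ n).natDegree ≤ n := by
  induction n using Nat.twoStepInduction with
  | zero => rw [show (((0:ℕ)):ℤ) = 0 by norm_num, U_zero]; simp
  | one =>
      rw [show (((1:ℕ)):ℤ) = 1 by norm_num, U_one]
      refine le_trans (Polynomial.natDegree_mul_le) ?_
      simp
  | more n ih ih1 =>
      have hU : U ℝ (((n+2:ℕ)):ℤ) = 2 * X * U ℝ ((n+1:ℕ) : ℤ) - U ℝ ((n : ℕ) : ℤ) := by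
        have := U_add_two ℝ (n : ℤ)
        push_cast
        ring_nf
        ring_nf at this
        exact this
      rw [hU]
      refine le_trans (Polynomial.natDegree_sub_le _ _) ?_
      have h1 : (2 * X * U ℝ ((n+1:ℕ) : ℤ)).natDegree ≤ n + 2 := by
        refine le_trans (Polynomial.natDegree_mul_le) ?_
        have h2 : (2 * X : ℝ[X]).natDegree ≤ 1 := le_trans (Polynomial.natDegree_mul_le) (by simp)
        omega
      simp only [max_le_iff]
      exact ⟨h1, by omega⟩

lemma U_eval_zero (n : ℕ) : (U ℝ n).eval 0 = Real.cos (Real.pi * n / 2) := by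
  induction n using Nat.twoStepInduction with
  | zero =>
      rw [show (((0:ℕ)):ℤ) = 0 by norm_num, U_zero]
      norm_num
  | one =>
      rw [show (((1:ℕ)):ℤ) = 1 by norm_num, U_one]
      rw [show Real.pi * (1:ℕ) / 2 = Real.pi / 2 by push_cast; ring, Real.cos_pi_div_two]
      simp
  | more n ih ih1 =>
      have hU : U ℝ (((n+2:ℕ)):ℤ) = 2 * X * U ℝ (((n:ℕ) : ℤ) + 1) - U ℝ ((n : ℕ) : ℤ) := by
        have := U_add_two ℝ (n : ℤ)
        push_cast
        ring_nf
        ring_nf at this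
        exact this
      rw [hU]
      simp only [eval_sub, eval_mul, eval_ofNat, eval_X, mul_zero, zero_mul, zero_sub]
      rw [ih]
      rw [show Real.pi * ((n:ℕ)+2 : ℕ) / 2 = Real.pi * n / 2 + Real.pi by push_cast; ring]
      rw [Real.cos_add_pi]

theorem chebyshev_U_identity (n : ℕ) (hn : 1 ≤ n) (x : ℝ) :
    (U ℝ n).eval x
      + ∑ k ∈ Finset.Icc 1 n, ((-1 : ℝ) ^ k / (Nat.factorial k)) *
          ∑ i ∈ Finset.range ((n - k) / 2 + 1),
            ((n : ℝ) - k - 2 * i + 1) * fallFac ((n : ℝ) - i) (k - 1)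
              * (Nat.choose (k + i - 1) (k - 1) : ℝ)
              * (U ℝ ((n - k - 2 * i : ℕ))).eval x * (2 * x) ^ k
    = Real.cos (Real.pi * n / 2) := by
  rw [← U_eval_zero n]
  have h0 : (U ℝ n).eval 0 = (Polynomial.taylor x (U ℝ n)).eval (0 - x) :=
    (Polynomial.taylor_eval_sub x _ 0).symm
  have hdeg : (Polynomial.taylor x (U ℝ n)).natDegree < n + 1 := by
    rw [Polynomial.natDegree_taylor]
    exact lt_of_le_of_lt (natDegree_U_le n) (Nat.lt_succ_self n)
  rw [h0, Polynomial.eval_eq_sum_range' hdeg]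
  have hterm : ∀ k ∈ Finset.range (n+1),
      (Polynomial.taylor x (U ℝ n)).coeff k * (0 - x)^k
      = (Polynomial.hasseDeriv k (U ℝ n)).eval x * (-x)^k := by
    intro k _
    rw [Polynomial.taylor_coeff, zero_sub]
  rw [Finset.sum_congr rfl hterm]
  have hins : Finset.range (n+1) = insert 0 (Finset.Icc 1 n) := by
    ext a; simp; omega
  rw [hins, Finset.sum_insert (by simp)]
  rw [Polynomial.hasseDeriv_zero, LinearMap.id_apply, pow_zero, mul_one]
  congr 1
  refine Finset.sum_congr rfl (fun k hk => ?_)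
  have hk1 : 1 ≤ k := (Finset.mem_Icc.mp hk).1
  have hk2 : k ≤ n := (Finset.mem_Icc.mp hk).2
  obtain ⟨j, rfl⟩ : ∃ j, k = j + 1 := ⟨k - 1, by omega⟩
  -- hasse derivative in terms of iterated derivative
  have hhd : (Polynomial.hasseDeriv (j+1) (U ℝ n)).eval x
      = (derivative^[j+1] (U ℝ n)).eval x / (Nat.factorial (j+1) : ℝ) := by
    have hfun := Polynomial.factorial_smul_hasseDeriv (R := ℝ) (j+1)
    have := congrFun (congrArg (fun F => (F : ℝ[X] → ℝ[X])) hfun) (U ℝ n)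
    simp only [LinearMap.smul_apply] at this
    rw [← this]
    rw [Polynomial.eval_smul, nsmul_eq_mul]
    field_simp
  rw [hhd, derivK j n (by omega)]
  rw [Polynomial.eval_smul]
  unfold _root_.S
  rw [Polynomial.eval_finset_sum]
  have hin : ∀ i ∈ Finset.range ((n - (j+1))/2 + 1),
      (C (((n:ℝ) - (j+1) - 2*i + 1) * fallFac ((n:ℝ) - i) j * ((j+i).choose j : ℝ))
        * U ℝ ((n:ℤ) - (j+1) - 2*i)).eval x
      = ((n : ℝ) - (j+1) - 2 * i + 1) * fallFac ((n : ℝ) - i) ((j+1) - 1)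
          * (Nat.choose ((j+1) + i - 1) ((j+1) - 1) : ℝ)
          * (U ℝ ((n - (j+1) - 2 * i : ℕ))).eval x := by
    intro i hi
    have hi' : 2 * i ≤ n - (j+1) := by
      have := Finset.mem_range.mp hi; omega
    have hidx : ((n:ℤ) - (j+1) - 2*i) = ((n - (j+1) - 2*i : ℕ) : ℤ) := by
      have e : (n - (j+1) - 2*i : ℕ) = n - (j+1+2*i) := by omega
      rw [e, Nat.cast_sub (by omega)]
      push_cast; ring
    rw [Polynomial.eval_mul, Polynomial.eval_C, hidx]
    have e2 : (j+1) - 1 = j := by omega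
    have e3 : (j+1) + i - 1 = j + i := by omega
    rw [e2, e3]
  rw [Finset.sum_congr rfl hin]
  have hfac : ((Nat.factorial (j+1) : ℝ)) ≠ 0 := by positivity
  field_simp
  ring_nf
  simp only [Finset.mul_sum, Finset.sum_mul, ← Finset.sum_neg_distrib]
  refine Finset.sum_congr rfl (fun i _ => ?_)
  push_cast
  ring
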